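/- arXiv:2201.11322 — 4 statements merged into one kernel-verified Lean document; each statement's English description precedes it below -/
import Mathlib

section
/- For every real ε > 0 there exists a constant C > 0 such that for every integer n ≥ 2 and every real number k with 6 ≤ k ≤ n³, one has n^{1+ε} · k · ∫_{n^{-3}}^{∞} ( (1+u)^{-k/2} + u^{-3/4} (1+u)^{-k/2} ) du ≤ C · n^{13/4+ε} · (1 - 1/(n³+1))^{k/2}. -/
open MeasureTheory

lemma shift_pre (c : ℝ) : (fun x : ℝ => x + 1) ⁻¹' Set.Ioi (c + 1) = Set.Ioi c := by
  ext x; simp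

lemma shift_integrable {p c : ℝ} (hp : p < -1) (hc : 0 < c) :
    IntegrableOn (fun u : ℝ => (1 + u) ^ p) (Set.Ioi c) := by
  have h1 : MeasurePreserving (fun x : ℝ => x + 1) volume volume :=
    measurePreserving_add_right volume 1
  have h2 : MeasurableEmbedding (fun x : ℝ => x + 1) := measurableEmbedding_addRight 1
  have h3 := (h1.integrableOn_comp_preimage h2 (f := fun y : ℝ => y ^ p)
      (s := Set.Ioi (c + 1))).2 (integrableOn_Ioi_rpow_of_lt hp (by linarith))
  rw [shift_pre] at h3
  have : (fun y : ℝ => y ^ p) ∘ (fun x : ℝ => x + 1) = fun u : ℝ => (1 + u) ^ p := by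
    funext u; simp [Function.comp, add_comm]
  rwa [this] at h3

lemma shift_integral {p c : ℝ} (hp : p < -1) (hc : 0 < c) :
    ∫ u in Set.Ioi c, (1 + u) ^ p = -(1 + c) ^ (p + 1) / (p + 1) := by
  have h1 : MeasurePreserving (fun x : ℝ => x + 1) volume volume :=
    measurePreserving_add_right volume 1
  have h2 : MeasurableEmbedding (fun x : ℝ => x + 1) := measurableEmbedding_addRight 1
  have h3 := h1.setIntegral_preimage_emb h2 (fun y : ℝ => y ^ p) (Set.Ioi (c + 1))
  rw [shift_pre] at h3
  have h4 : ∫ u in Set.Ioi c, (1 + u) ^ p = ∫ x in Set.Ioi c, (x + 1) ^ p := by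
    congr 1; funext u; rw [add_comm]
  rw [h4, h3, integral_Ioi_rpow_of_lt hp (by linarith), add_comm c 1]

/-- Bound for the tail integral of `(1+u)^p`. -/
lemma shift_integral_le {k c d : ℝ} (hk : 6 ≤ k) (hc : 0 < c) (hd : 0 < d) (hcd : d ≤ c)
    (hc1 : c ≤ 1) :
    ∫ u in Set.Ioi c, (1 + u) ^ (-(k / 2)) ≤ 6 / k * (1 + d) ^ (-(k / 2)) := by
  have hp : -(k / 2) < -1 := by linarith
  rw [shift_integral hp hc]
  have h1 : -(1 + c) ^ (-(k / 2) + 1) / (-(k / 2) + 1) =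
      (1 + c) ^ (-(k / 2) + 1) / (k / 2 - 1) := by
    rw [div_eq_div_iff (by linarith) (by linarith)]; ring
  rw [h1]
  have hbase : (0:ℝ) < 1 + c := by linarith
  have h2 : (1 + c) ^ (-(k / 2) + 1) = (1 + c) ^ (-(k / 2)) * (1 + c) := by
    rw [Real.rpow_add hbase, Real.rpow_one]
  have h3 : (1 + c) ^ (-(k / 2)) ≤ (1 + d) ^ (-(k / 2)) :=
    Real.rpow_le_rpow_of_nonpos (by linarith) (by linarith) (by linarith)
  have h4 : (1 + c) ^ (-(k / 2)) * (1 + c) ≤ (1 + d) ^ (-(k / 2)) * 2 := by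
    apply mul_le_mul h3 (by linarith) (by linarith) (Real.rpow_nonneg (by linarith) _)
  calc (1 + c) ^ (-(k / 2) + 1) / (k / 2 - 1)
      ≤ (1 + d) ^ (-(k / 2)) * 2 / (k / 2 - 1) := by
        apply div_le_div_of_nonneg_right ?_ (by linarith)
        · rw [h2]; exact h4
    _ ≤ 6 / k * (1 + d) ^ (-(k / 2)) := by
        rw [div_le_iff₀ (by linarith : (0:ℝ) < k / 2 - 1)]
        have hB : (0:ℝ) ≤ (1 + d) ^ (-(k / 2)) :=
          Real.rpow_nonneg (by linarith) _
        have h5 : (2:ℝ) ≤ 6 / k * (k / 2 - 1) := by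
          rw [div_mul_eq_mul_div, le_div_iff₀ (by linarith)]; nlinarith
        calc (1 + d) ^ (-(k / 2)) * 2 = 2 * (1 + d) ^ (-(k / 2)) := by ring
          _ ≤ 6 / k * (k / 2 - 1) * (1 + d) ^ (-(k / 2)) :=
              mul_le_mul_of_nonneg_right h5 hB
          _ = 6 / k * (1 + d) ^ (-(k / 2)) * (k / 2 - 1) := by ring


/-- For every real ε > 0 there exists a constant C > 0 such that for every integer n ≥ 2 and
every real number k with 6 ≤ k ≤ n³, one has
n^{1+ε} · k · ∫_{n^{-3}}^{∞} ((1+u)^{-k/2} + u^{-3/4}(1+u)^{-k/2}) du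
  ≤ C · n^{13/4+ε} · (1 - 1/(n³+1))^{k/2}. -/
theorem integral_tail_bound :
    ∀ ε : ℝ, 0 < ε → ∃ C : ℝ, 0 < C ∧
      ∀ n : ℕ, 2 ≤ n → ∀ k : ℝ, 6 ≤ k → k ≤ (n : ℝ) ^ (3 : ℕ) →
        (n : ℝ) ^ (1 + ε) * k *
            ∫ u in Set.Ioi (((n : ℝ) ^ (3 : ℕ))⁻¹),
              ((1 + u) ^ (-(k / 2)) + u ^ (-(3 / 4 : ℝ)) * (1 + u) ^ (-(k / 2))) ≤
          C * (n : ℝ) ^ (13 / 4 + ε) * (1 - 1 / ((n : ℝ) ^ (3 : ℕ) + 1)) ^ (k / 2) := by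
  intro ε hε
  refine ⟨16, by norm_num, ?_⟩
  intro n hn k hk6 hkN
  have hn2 : (2:ℝ) ≤ (n:ℝ) := by exact_mod_cast hn
  have hn0 : (0:ℝ) < (n:ℝ) := by linarith
  set N : ℝ := (n:ℝ) ^ (3:ℕ) with hN
  have hN8 : (8:ℝ) ≤ N := by
    have h := pow_le_pow_left₀ (by norm_num : (0:ℝ) ≤ 2) hn2 3
    norm_num at h; rw [hN]; linarith
  have hNpos : (0:ℝ) < N := by linarith
  have hkpos : (0:ℝ) < k := by linarith
  set a : ℝ := N⁻¹ with ha
  have hapos : 0 < a := inv_pos.2 hNpos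
  have ha1 : a ≤ 1 := by
    rw [ha, inv_le_one_iff₀]; right; linarith
  set b : ℝ := k⁻¹ with hb
  have hbpos : 0 < b := inv_pos.2 hkpos
  have hb1 : b ≤ 1 := by rw [hb, inv_le_one_iff₀]; right; linarith
  have hab : a ≤ b := by rw [ha, hb]; exact inv_anti₀ hkpos hkN
  have hp : -(k/2) < -1 := by linarith
  set B : ℝ := (1 + a) ^ (-(k/2)) with hBdef
  have hBnn : 0 ≤ B := Real.rpow_nonneg (by linarith) _
  -- integrability
  have hI1 : IntegrableOn (fun u : ℝ => (1+u) ^ (-(k/2))) (Set.Ioi a) :=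
    shift_integrable hp hapos
  have hI1b : IntegrableOn (fun u : ℝ => (1+u) ^ (-(k/2))) (Set.Ioi b) :=
    shift_integrable hp hbpos
  have hmeas : Measurable (fun u : ℝ => u ^ (-(3/4:ℝ)) * (1+u) ^ (-(k/2))) := by
    fun_prop
  have hI2a : IntegrableOn (fun u : ℝ => u ^ (-(3/4:ℝ)) * (1+u) ^ (-(k/2))) (Set.Ioc a b) := by
    apply ((ContinuousOn.integrableOn_compact isCompact_Icc ?_)).mono_set
      Set.Ioc_subset_Icc_self
    apply ContinuousOn.mul
    · exact ContinuousOn.rpow_const continuousOn_id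
        (fun x hx => Or.inl (ne_of_gt (lt_of_lt_of_le hapos hx.1)))
    · exact ContinuousOn.rpow_const (by fun_prop)
        (fun x hx => Or.inl (by have := hx.1; intro h; nlinarith))
  have hub : ∀ u ∈ Set.Ioi b, u ^ (-(3/4:ℝ)) ≤ k ^ (3/4:ℝ) := by
    intro u hu
    have h1 : u ^ (-(3/4:ℝ)) ≤ b ^ (-(3/4:ℝ)) :=
      Real.rpow_le_rpow_of_nonpos hbpos (le_of_lt hu) (by norm_num)
    have h2 : b ^ (-(3/4:ℝ)) = k ^ (3/4:ℝ) := by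
      rw [hb, Real.inv_rpow hkpos.le, Real.rpow_neg hkpos.le, inv_inv]
    linarith
  have hI2b : IntegrableOn (fun u : ℝ => u ^ (-(3/4:ℝ)) * (1+u) ^ (-(k/2))) (Set.Ioi b) := by
    apply Integrable.mono (hI1b.const_mul (k ^ (3/4:ℝ)))
      hmeas.aestronglyMeasurable.restrict
    filter_upwards [ae_restrict_mem measurableSet_Ioi] with u hu
    have hu' : b < u := hu
    have h1pos : (0:ℝ) < 1 + u := by linarith
    have hu0 : (0:ℝ) < u := lt_trans hbpos hu'
    rw [Real.norm_eq_abs, Real.norm_eq_abs,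
      abs_of_nonneg (mul_nonneg (Real.rpow_nonneg hu0.le _) (Real.rpow_nonneg h1pos.le _)),
      abs_of_nonneg (mul_nonneg (Real.rpow_nonneg hkpos.le _) (Real.rpow_nonneg h1pos.le _))]
    exact mul_le_mul_of_nonneg_right (hub u hu) (Real.rpow_nonneg h1pos.le _)
  have hI2 : IntegrableOn (fun u : ℝ => u ^ (-(3/4:ℝ)) * (1+u) ^ (-(k/2))) (Set.Ioi a) := by
    rw [← Set.Ioc_union_Ioi_eq_Ioi hab]; exact hI2a.union hI2b
  -- split
  have hsplit : (∫ u in Set.Ioi a, ((1+u) ^ (-(k/2)) + u ^ (-(3/4:ℝ)) * (1+u) ^ (-(k/2))))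
      = (∫ u in Set.Ioi a, (1+u) ^ (-(k/2)))
        + ∫ u in Set.Ioi a, u ^ (-(3/4:ℝ)) * (1+u) ^ (-(k/2)) :=
    integral_add hI1 hI2
  have hsplit2 : (∫ u in Set.Ioi a, u ^ (-(3/4:ℝ)) * (1+u) ^ (-(k/2)))
      = (∫ u in Set.Ioc a b, u ^ (-(3/4:ℝ)) * (1+u) ^ (-(k/2)))
        + ∫ u in Set.Ioi b, u ^ (-(3/4:ℝ)) * (1+u) ^ (-(k/2)) := by
    rw [← setIntegral_union (Set.Ioc_disjoint_Ioi le_rfl) measurableSet_Ioi hI2a hI2b,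
      Set.Ioc_union_Ioi_eq_Ioi hab]
  -- bound pieces
  have hJ1 : (∫ u in Set.Ioi a, (1+u) ^ (-(k/2))) ≤ 6 / k * B :=
    shift_integral_le hk6 hapos hapos le_rfl ha1
  have hJ2b : (∫ u in Set.Ioi b, u ^ (-(3/4:ℝ)) * (1+u) ^ (-(k/2)))
      ≤ k ^ (3/4:ℝ) * (6 / k * B) := by
    calc (∫ u in Set.Ioi b, u ^ (-(3/4:ℝ)) * (1+u) ^ (-(k/2)))
        ≤ ∫ u in Set.Ioi b, k ^ (3/4:ℝ) * (1+u) ^ (-(k/2)) := by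
          apply setIntegral_mono_on hI2b (hI1b.const_mul _) measurableSet_Ioi
          intro u hu
          have hu' : b < u := hu
          have h1pos : (0:ℝ) < 1 + u := by linarith
          exact mul_le_mul_of_nonneg_right (hub u hu) (Real.rpow_nonneg h1pos.le _)
      _ = k ^ (3/4:ℝ) * ∫ u in Set.Ioi b, (1+u) ^ (-(k/2)) := integral_const_mul _ _
      _ ≤ k ^ (3/4:ℝ) * (6 / k * B) := by
          apply mul_le_mul_of_nonneg_left
            (shift_integral_le hk6 hbpos hapos hab hb1)
            (Real.rpow_nonneg hkpos.le _)
  have hJ2a : (∫ u in Set.Ioc a b, u ^ (-(3/4:ℝ)) * (1+u) ^ (-(k/2)))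
      ≤ 4 * k ^ (-(1/4:ℝ)) * B := by
    have hint : IntegrableOn (fun u : ℝ => u ^ (-(3/4:ℝ)) * B) (Set.Ioc a b) := by
      apply (((ContinuousOn.rpow_const continuousOn_id
          (fun x hx => Or.inl (ne_of_gt (lt_of_lt_of_le hapos hx.1)))).mul
          continuousOn_const).integrableOn_compact isCompact_Icc).mono_set
        Set.Ioc_subset_Icc_self
    calc (∫ u in Set.Ioc a b, u ^ (-(3/4:ℝ)) * (1+u) ^ (-(k/2)))
        ≤ ∫ u in Set.Ioc a b, u ^ (-(3/4:ℝ)) * B := by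
          apply setIntegral_mono_on hI2a hint measurableSet_Ioc
          intro u hu
          have hu0 : 0 < u := lt_trans hapos hu.1
          apply mul_le_mul_of_nonneg_left
            (Real.rpow_le_rpow_of_nonpos (by linarith) (by linarith [hu.1]) (by linarith))
            (Real.rpow_nonneg hu0.le _)
      _ = (∫ u in Set.Ioc a b, u ^ (-(3/4:ℝ))) * B := integral_mul_const _ _
      _ ≤ 4 * k ^ (-(1/4:ℝ)) * B := by
          apply mul_le_mul_of_nonneg_right ?_ hBnn
          have hval : (∫ u in Set.Ioc a b, u ^ (-(3/4:ℝ)))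
              = (b ^ (-(3/4:ℝ) + 1) - a ^ (-(3/4:ℝ) + 1)) / (-(3/4:ℝ) + 1) := by
            rw [← intervalIntegral.integral_of_le hab]
            exact integral_rpow (Or.inl (by norm_num))
          rw [hval]
          have ha4 : 0 ≤ a ^ (-(3/4:ℝ) + 1) := Real.rpow_nonneg hapos.le _
          have hb4 : b ^ (-(3/4:ℝ) + 1) = k ^ (-(1/4:ℝ)) := by
            rw [hb, Real.inv_rpow hkpos.le, ← Real.rpow_neg hkpos.le]
            norm_num
          rw [hb4]
          have hk14 : (0:ℝ) ≤ k ^ (-(1/4:ℝ)) := Real.rpow_nonneg hkpos.le _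
          rw [show (-(3/4:ℝ) + 1) = 1/4 by norm_num] at ha4 ⊢
          rw [div_le_iff₀ (by norm_num : (0:ℝ) < 1/4)]
          linarith
  -- assemble
  have hkk : k * k ^ (-(1/4:ℝ)) = k ^ (3/4:ℝ) := by
    nth_rewrite 1 [← Real.rpow_one k]
    rw [← Real.rpow_add hkpos]; norm_num
  have honek : (1:ℝ) ≤ k ^ (3/4:ℝ) := Real.one_le_rpow (by linarith) (by norm_num)
  have hkI : k * (∫ u in Set.Ioi a,
        ((1+u) ^ (-(k/2)) + u ^ (-(3/4:ℝ)) * (1+u) ^ (-(k/2))))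
      ≤ 16 * k ^ (3/4:ℝ) * B := by
    rw [hsplit, hsplit2]
    calc k * ((∫ u in Set.Ioi a, (1+u) ^ (-(k/2)))
          + ((∫ u in Set.Ioc a b, u ^ (-(3/4:ℝ)) * (1+u) ^ (-(k/2)))
            + ∫ u in Set.Ioi b, u ^ (-(3/4:ℝ)) * (1+u) ^ (-(k/2))))
        ≤ k * (6/k*B + (4 * k ^ (-(1/4:ℝ)) * B + k ^ (3/4:ℝ) * (6/k*B))) :=
          mul_le_mul_of_nonneg_left (add_le_add hJ1 (add_le_add hJ2a hJ2b)) hkpos.le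
      _ = 6*B + (4*(k * k ^ (-(1/4:ℝ)))*B + 6*(k ^ (3/4:ℝ) * B)) := by
          field_simp
      _ = 6*B + (4*(k ^ (3/4:ℝ))*B + 6*(k ^ (3/4:ℝ) * B)) := by rw [hkk]
      _ ≤ 16 * k ^ (3/4:ℝ) * B := by nlinarith [hBnn, honek]
  have hk34 : k ^ (3/4:ℝ) ≤ (n:ℝ) ^ ((9:ℝ)/4) := by
    have h1 : k ^ (3/4:ℝ) ≤ N ^ (3/4:ℝ) := Real.rpow_le_rpow hkpos.le hkN (by norm_num)
    have h2 : N ^ (3/4:ℝ) = (n:ℝ) ^ ((9:ℝ)/4) := by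
      rw [hN, ← Real.rpow_natCast (n:ℝ) 3, ← Real.rpow_mul hn0.le]; norm_num
    linarith
  have hBeq : (1 - 1/(N+1)) ^ (k/2) = B := by
    have h1 : (1 : ℝ) - 1/(N+1) = (1+a)⁻¹ := by
      rw [ha]; field_simp; ring
    rw [h1, Real.inv_rpow (by linarith : (0:ℝ) ≤ 1+a),
      ← Real.rpow_neg (by linarith : (0:ℝ) ≤ 1+a)]
  rw [hBeq]
  have hrnn : (0:ℝ) ≤ (n:ℝ) ^ (1+ε) := Real.rpow_nonneg hn0.le _
  calc (n:ℝ) ^ (1+ε) * k * (∫ u in Set.Ioi a,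
          ((1+u) ^ (-(k/2)) + u ^ (-(3/4:ℝ)) * (1+u) ^ (-(k/2))))
      = (n:ℝ) ^ (1+ε) * (k * ∫ u in Set.Ioi a,
          ((1+u) ^ (-(k/2)) + u ^ (-(3/4:ℝ)) * (1+u) ^ (-(k/2)))) := by ring
    _ ≤ (n:ℝ) ^ (1+ε) * (16 * k ^ (3/4:ℝ) * B) := mul_le_mul_of_nonneg_left hkI hrnn
    _ ≤ (n:ℝ) ^ (1+ε) * (16 * (n:ℝ) ^ ((9:ℝ)/4) * B) := by
        apply mul_le_mul_of_nonneg_left ?_ hrnn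
        apply mul_le_mul_of_nonneg_right ?_ hBnn
        linarith
    _ = 16 * ((n:ℝ) ^ (1+ε) * (n:ℝ) ^ ((9:ℝ)/4)) * B := by ring
    _ = 16 * (n:ℝ) ^ (13/4+ε) * B := by
        rw [← Real.rpow_add hn0, show (1+ε+(9:ℝ)/4) = 13/4+ε by ring]
end

section
/- There exists an absolute constant C > 0 such that for every real number k ≥ 6 and every real number a with 0 < a ≤ 1, one has ∫_a^{∞} u^{-3/4} (1+u)^{-k/2} du ≤ C · k^{-1/4} · (1+a)^{-k/2}. -/
open MeasureTheory

lemma aux_preimage_add_one (b : ℝ) :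
    (fun x : ℝ => x + 1) ⁻¹' Set.Ioi (1 + b) = Set.Ioi b := by
  ext x
  simp only [Set.mem_preimage, Set.mem_Ioi]
  constructor <;> intro h <;> linarith

lemma aux_integrableOn_one_add_rpow {p b : ℝ} (hp : p < -1) (hb : 0 < b) :
    IntegrableOn (fun u : ℝ => (1 + u) ^ p) (Set.Ioi b) := by
  have h := (measurePreserving_add_right volume (1 : ℝ)).integrableOn_comp_preimage
      (measurableEmbedding_addRight (1 : ℝ)) (f := fun x : ℝ => x ^ p) (s := Set.Ioi (1 + b))
  rw [aux_preimage_add_one] at h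
  have h2 := h.2 (integrableOn_Ioi_rpow_of_lt hp (by linarith))
  refine h2.congr_fun (fun x _ => ?_) measurableSet_Ioi
  simp [Function.comp, add_comm]

lemma aux_integral_one_add_rpow {p b : ℝ} (hp : p < -1) (hb : 0 < b) :
    ∫ u in Set.Ioi b, (1 + u) ^ p = -(1 + b) ^ (p + 1) / (p + 1) := by
  have h := (measurePreserving_add_right volume (1 : ℝ)).setIntegral_preimage_emb
      (measurableEmbedding_addRight (1 : ℝ)) (fun x : ℝ => x ^ p) (Set.Ioi (1 + b))
  rw [aux_preimage_add_one] at h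
  have hcong : ∀ u : ℝ, (1 + u) ^ p = (u + 1) ^ p := fun u => by rw [add_comm]
  simp_rw [hcong]
  rw [h, integral_Ioi_rpow_of_lt hp (by linarith)]

lemma aux_quarter_subadd {x y : ℝ} (hx : 0 ≤ x) (hy : 0 ≤ y) :
    (x + y) ^ ((4 : ℝ)⁻¹) ≤ x ^ ((4 : ℝ)⁻¹) + y ^ ((4 : ℝ)⁻¹) := by
  have h := NNReal.rpow_add_le_add_rpow (x.toNNReal) (y.toNNReal)
      (by norm_num : (0 : ℝ) ≤ (4 : ℝ)⁻¹) (by norm_num)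
  have h' := NNReal.coe_le_coe.mpr h
  simpa [NNReal.coe_rpow, Real.toNNReal_add hx hy, Real.coe_toNNReal, hx, hy,
    Real.coe_toNNReal x hx, Real.coe_toNNReal y hy] using h'

/-- There exists an absolute constant C > 0 such that for every real number k ≥ 6 and every
real number a with 0 < a ≤ 1, one has
∫_a^{∞} u^{-3/4}(1+u)^{-k/2} du ≤ C · k^{-1/4} · (1+a)^{-k/2}. -/
theorem tail_integral_uniform_bound :
    ∃ C : ℝ, 0 < C ∧
      ∀ k : ℝ, 6 ≤ k → ∀ a : ℝ, 0 < a → a ≤ 1 →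
        (∫ u in Set.Ioi a, u ^ (-(3 / 4 : ℝ)) * (1 + u) ^ (-(k / 2))) ≤
          C * k ^ (-(1 / 4 : ℝ)) * (1 + a) ^ (-(k / 2)) := by
  refine ⟨10, by norm_num, ?_⟩
  intro k hk a ha ha1
  have hk0 : (0 : ℝ) < k := by linarith
  set p : ℝ := -(k / 2) with hp_def
  have hp : p < -1 := by rw [hp_def]; linarith
  set b : ℝ := a + 1 / k with hb_def
  have hb0 : 0 < b := by positivity
  have hab : a ≤ b := by
    have h0 : (0:ℝ) < 1 / k := by positivity
    rw [hb_def]; linarith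
  have h1a : (0 : ℝ) < 1 + a := by linarith
  have h1b : (0 : ℝ) < 1 + b := by linarith
  have hpneg : p ≤ 0 := by linarith
  -- measurability
  have hcont : ContinuousOn (fun u : ℝ => u ^ (-(3 / 4 : ℝ)) * (1 + u) ^ p) (Set.Ioi a) := by
    intro u hu
    have hu0 : (0 : ℝ) < u := lt_trans ha hu
    apply ContinuousAt.continuousWithinAt
    exact (Real.continuousAt_rpow_const u _ (Or.inl hu0.ne')).mul
      (((continuous_const.add continuous_id).continuousAt).rpow_const (Or.inl (by show (1:ℝ) + u ≠ 0; positivity)))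
  -- integrability of (1+u)^p on tails
  have hInta : IntegrableOn (fun u : ℝ => (1 + u) ^ p) (Set.Ioi a) :=
    aux_integrableOn_one_add_rpow hp ha
  have hIntb : IntegrableOn (fun u : ℝ => (1 + u) ^ p) (Set.Ioi b) :=
    aux_integrableOn_one_add_rpow hp hb0
  -- integrability of the full integrand
  have hIntg : IntegrableOn (fun u : ℝ => u ^ (-(3 / 4 : ℝ)) * (1 + u) ^ p) (Set.Ioi a) := by
    apply Integrable.mono' (hInta.const_mul (a ^ (-(3 / 4 : ℝ))))
    · exact hcont.aestronglyMeasurable measurableSet_Ioi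
    · filter_upwards [ae_restrict_mem measurableSet_Ioi] with u hu
      have hu0 : 0 < u := lt_trans ha hu
      rw [Real.norm_eq_abs, abs_of_nonneg (by positivity)]
      exact mul_le_mul_of_nonneg_right
        (Real.rpow_le_rpow_of_nonpos ha hu.le (by norm_num))
        (Real.rpow_nonneg (by linarith) p)
  -- split the integral
  have hsplit : (∫ u in Set.Ioi a, u ^ (-(3 / 4 : ℝ)) * (1 + u) ^ p) =
      (∫ u in Set.Ioc a b, u ^ (-(3 / 4 : ℝ)) * (1 + u) ^ p) +
      ∫ u in Set.Ioi b, u ^ (-(3 / 4 : ℝ)) * (1 + u) ^ p := by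
    rw [← setIntegral_union (Set.Ioc_disjoint_Ioi le_rfl) measurableSet_Ioi
      (hIntg.mono_set Set.Ioc_subset_Ioi_self) (hIntg.mono_set (Set.Ioi_subset_Ioi hab)),
      Set.Ioc_union_Ioi_eq_Ioi hab]
  -- piece 1
  have hIoc1 : IntegrableOn (fun u : ℝ => u ^ (-(3 / 4 : ℝ))) (Set.Ioc a b) :=
    (intervalIntegral.intervalIntegrable_rpow' (by norm_num)).1
  have h1 : (∫ u in Set.Ioc a b, u ^ (-(3 / 4 : ℝ)) * (1 + u) ^ p) ≤
      (1 + a) ^ p * (4 * k ^ (-(1 / 4 : ℝ))) := by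
    have step1 : (∫ u in Set.Ioc a b, u ^ (-(3 / 4 : ℝ)) * (1 + u) ^ p) ≤
        ∫ u in Set.Ioc a b, (1 + a) ^ p * u ^ (-(3 / 4 : ℝ)) := by
      apply setIntegral_mono_on (hIntg.mono_set Set.Ioc_subset_Ioi_self)
        (hIoc1.const_mul _) measurableSet_Ioc
      intro u hu
      have hu0 : 0 < u := lt_trans ha hu.1
      rw [mul_comm ((1 + a) ^ p)]
      exact mul_le_mul_of_nonneg_left
        (Real.rpow_le_rpow_of_nonpos h1a (by linarith [hu.1.le]) hpneg)
        (Real.rpow_nonneg hu0.le _)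
    have step2 : (∫ u in Set.Ioc a b, (1 + a) ^ p * u ^ (-(3 / 4 : ℝ))) =
        (1 + a) ^ p * (4 * (b ^ ((4 : ℝ)⁻¹) - a ^ ((4 : ℝ)⁻¹))) := by
      rw [MeasureTheory.integral_const_mul, ← intervalIntegral.integral_of_le hab,
        integral_rpow (Or.inl (by norm_num))]
      have he : (-(3 / 4 : ℝ)) + 1 = ((4 : ℝ)⁻¹ : ℝ) := by norm_num
      rw [he]
      ring
    have step3 : b ^ ((4 : ℝ)⁻¹) - a ^ ((4 : ℝ)⁻¹) ≤ k ^ (-(1 / 4 : ℝ)) := by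
      have := aux_quarter_subadd ha.le (le_of_lt (show (0:ℝ) < 1 / k by positivity))
      have hinv : (1 / k) ^ ((4 : ℝ)⁻¹) = k ^ (-(1 / 4 : ℝ)) := by
        rw [one_div, ← Real.rpow_neg_one k, ← Real.rpow_mul hk0.le]
        norm_num
      rw [hb_def]
      linarith [this, hinv.le]
    have hnn : (0 : ℝ) ≤ (1 + a) ^ p := Real.rpow_nonneg h1a.le _
    calc (∫ u in Set.Ioc a b, u ^ (-(3 / 4 : ℝ)) * (1 + u) ^ p)
        ≤ (1 + a) ^ p * (4 * (b ^ ((4 : ℝ)⁻¹) - a ^ ((4 : ℝ)⁻¹))) := step1.trans step2.le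
      _ ≤ (1 + a) ^ p * (4 * k ^ (-(1 / 4 : ℝ))) := by
          apply mul_le_mul_of_nonneg_left _ hnn
          linarith [step3]
  -- piece 2
  have h2 : (∫ u in Set.Ioi b, u ^ (-(3 / 4 : ℝ)) * (1 + u) ^ p) ≤
      (1 + a) ^ p * (6 * k ^ (-(1 / 4 : ℝ))) := by
    have step1 : (∫ u in Set.Ioi b, u ^ (-(3 / 4 : ℝ)) * (1 + u) ^ p) ≤
        ∫ u in Set.Ioi b, b ^ (-(3 / 4 : ℝ)) * (1 + u) ^ p := by
      apply setIntegral_mono_on (hIntg.mono_set (Set.Ioi_subset_Ioi hab))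
        (hIntb.const_mul _) measurableSet_Ioi
      intro u hu
      have hu0 : 0 < u := lt_trans hb0 hu
      exact mul_le_mul_of_nonneg_right
        (Real.rpow_le_rpow_of_nonpos hb0 hu.le (by norm_num))
        (Real.rpow_nonneg (by linarith) _)
    have step2 : (∫ u in Set.Ioi b, b ^ (-(3 / 4 : ℝ)) * (1 + u) ^ p) =
        b ^ (-(3 / 4 : ℝ)) * (-(1 + b) ^ (p + 1) / (p + 1)) := by
      rw [MeasureTheory.integral_const_mul, aux_integral_one_add_rpow hp hb0]
    -- bound the product
    have hq : -(1 + b) ^ (p + 1) / (p + 1) = (1 + b) ^ (p + 1) / (k / 2 - 1) := by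
      have hpe : p + 1 = -(k / 2 - 1) := by rw [hp_def]; ring
      rw [hpe, neg_div_neg_eq]
    have hb34 : b ^ (-(3 / 4 : ℝ)) ≤ k ^ ((3 / 4 : ℝ)) := by
      have h1k : (1 / k : ℝ) ≤ b := by rw [hb_def]; linarith
      have := Real.rpow_le_rpow_of_nonpos (by positivity : (0:ℝ) < 1 / k) h1k
        (by norm_num : -(3 / 4 : ℝ) ≤ 0)
      have heq : (1 / k : ℝ) ^ (-(3 / 4 : ℝ)) = k ^ ((3 / 4 : ℝ)) := by
        rw [one_div, ← Real.rpow_neg_one k, ← Real.rpow_mul hk0.le]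
        norm_num
      linarith [this, heq.le]
    have hbp1 : (1 + b) ^ (p + 1) ≤ 2 * (1 + a) ^ p := by
      have h1 : (1 + b) ^ (p + 1) ≤ (1 + a) ^ (p + 1) :=
        Real.rpow_le_rpow_of_nonpos h1a (by linarith) (by linarith)
      have h2 : (1 + a) ^ (p + 1) = (1 + a) ^ p * (1 + a) := Real.rpow_add_one h1a.ne' p
      have h3 : (1 + a) ^ p * (1 + a) ≤ (1 + a) ^ p * 2 :=
        mul_le_mul_of_nonneg_left (by linarith) (Real.rpow_nonneg h1a.le _)
      linarith
    have hqk : (1 : ℝ) / (k / 2 - 1) ≤ 3 / k := by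
      rw [div_le_div_iff₀ (by linarith) hk0]
      linarith
    have hpos1 : (0 : ℝ) < k / 2 - 1 := by linarith
    have hfinal : b ^ (-(3 / 4 : ℝ)) * ((1 + b) ^ (p + 1) / (k / 2 - 1)) ≤
        (1 + a) ^ p * (6 * k ^ (-(1 / 4 : ℝ))) := by
      have hnnb : (0 : ℝ) ≤ b ^ (-(3 / 4 : ℝ)) := Real.rpow_nonneg hb0.le _
      have hnn1b : (0 : ℝ) ≤ (1 + b) ^ (p + 1) := Real.rpow_nonneg h1b.le _
      have hnna : (0 : ℝ) ≤ (1 + a) ^ p := Real.rpow_nonneg h1a.le _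
      have key : b ^ (-(3 / 4 : ℝ)) * ((1 + b) ^ (p + 1) / (k / 2 - 1)) ≤
          k ^ ((3 / 4 : ℝ)) * ((2 * (1 + a) ^ p) * (3 / k)) := by
        have e1 : (1 + b) ^ (p + 1) / (k / 2 - 1) ≤ (2 * (1 + a) ^ p) * (3 / k) := by
          calc (1 + b) ^ (p + 1) / (k / 2 - 1)
              = (1 + b) ^ (p + 1) * (1 / (k / 2 - 1)) := by ring
            _ ≤ (2 * (1 + a) ^ p) * (3 / k) :=
                mul_le_mul hbp1 hqk (by positivity) (by positivity)
        have hnnr : (0 : ℝ) ≤ (1 + b) ^ (p + 1) / (k / 2 - 1) := by positivity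
        exact mul_le_mul hb34 e1 hnnr (by positivity)
      have keq : k ^ ((3 / 4 : ℝ)) * ((2 * (1 + a) ^ p) * (3 / k)) =
          (1 + a) ^ p * (6 * k ^ (-(1 / 4 : ℝ))) := by
        have : k ^ ((3 / 4 : ℝ)) * (3 / k) = 3 * k ^ (-(1 / 4 : ℝ)) := by
          have h3k : (3 : ℝ) / k = 3 * k ^ (-1 : ℝ) := by
            rw [Real.rpow_neg_one]; ring
          rw [h3k]
          calc k ^ ((3/4:ℝ)) * (3 * k ^ (-1:ℝ))
              = 3 * (k ^ ((3/4:ℝ)) * k ^ (-1:ℝ)) := by ring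
            _ = 3 * k ^ ((3/4:ℝ) + (-1:ℝ)) := by rw [← Real.rpow_add hk0]
            _ = 3 * k ^ (-(1/4:ℝ)) := by norm_num
        calc k ^ ((3 / 4 : ℝ)) * ((2 * (1 + a) ^ p) * (3 / k))
            = (2 * (1 + a) ^ p) * (k ^ ((3 / 4 : ℝ)) * (3 / k)) := by ring
          _ = (2 * (1 + a) ^ p) * (3 * k ^ (-(1 / 4 : ℝ))) := by rw [this]
          _ = (1 + a) ^ p * (6 * k ^ (-(1 / 4 : ℝ))) := by ring
      linarith [key, keq.le, keq.ge]
    calc (∫ u in Set.Ioi b, u ^ (-(3 / 4 : ℝ)) * (1 + u) ^ p)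
        ≤ b ^ (-(3 / 4 : ℝ)) * (-(1 + b) ^ (p + 1) / (p + 1)) := step1.trans step2.le
      _ = b ^ (-(3 / 4 : ℝ)) * ((1 + b) ^ (p + 1) / (k / 2 - 1)) := by rw [hq]
      _ ≤ (1 + a) ^ p * (6 * k ^ (-(1 / 4 : ℝ))) := hfinal
  -- combine
  have hnna : (0 : ℝ) ≤ (1 + a) ^ p := Real.rpow_nonneg h1a.le _
  calc (∫ u in Set.Ioi a, u ^ (-(3 / 4 : ℝ)) * (1 + u) ^ (-(k / 2)))
      = (∫ u in Set.Ioc a b, u ^ (-(3 / 4 : ℝ)) * (1 + u) ^ p) +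
        ∫ u in Set.Ioi b, u ^ (-(3 / 4 : ℝ)) * (1 + u) ^ p := hsplit
    _ ≤ (1 + a) ^ p * (4 * k ^ (-(1 / 4 : ℝ))) + (1 + a) ^ p * (6 * k ^ (-(1 / 4 : ℝ))) :=
        add_le_add h1 h2
    _ = 10 * k ^ (-(1 / 4 : ℝ)) * (1 + a) ^ (-(k / 2)) := by rw [hp_def]; ring
end

section
/- As N → ∞ through the positive integers, (1 - 1/(N³+1))^{6 N³ log N} = N^{-6} + O(log N / N⁹); that is, the function N ↦ (1 - 1/(N³+1))^{6 N³ log N} − N^{-6} is big-O of the function N ↦ (log N)/N⁹ along the filter at infinity on ℕ. -/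
open Filter Asymptotics

/-- As N → ∞ through the positive integers,
(1 - 1/(N³+1))^{6N³ log N} = N^{-6} + O(log N / N⁹). -/
theorem geometric_decay_asymptotic :
    (fun N : ℕ =>
        (1 - 1 / ((N : ℝ) ^ (3 : ℕ) + 1)) ^ (6 * (N : ℝ) ^ (3 : ℕ) * Real.log N) -
          (N : ℝ) ^ (-(6 : ℝ))) =O[atTop]
      fun N : ℕ => Real.log N / (N : ℝ) ^ (9 : ℕ) := by
  rw [isBigO_iff]
  refine ⟨18, ?_⟩
  filter_upwards [eventually_ge_atTop 2] with N hN
  have hn2 : (2:ℝ) ≤ (N:ℝ) := by exact_mod_cast hN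
  set n : ℝ := (N:ℝ) with hn
  have hn1 : (1:ℝ) ≤ n := by linarith
  have hn0 : (0:ℝ) < n := by linarith
  set a : ℝ := n ^ (3:ℕ) with ha
  have ha8 : (8:ℝ) ≤ a := by
    have : (2:ℝ)^(3:ℕ) ≤ n^(3:ℕ) := pow_le_pow_left₀ (by norm_num) hn2 3
    norm_num at this; linarith [this]
  have ha0 : (0:ℝ) < a := by linarith
  have hlogn : 0 ≤ Real.log n := Real.log_nonneg hn1
  have hb : 1 - 1/(a+1) = a/(a+1) := by field_simp; ring
  have hbpos : (0:ℝ) < a/(a+1) := by positivity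
  set L : ℝ := Real.log (1 + 1/a) with hL
  have hLle : L ≤ 1/a := by
    have h := Real.log_le_sub_one_of_pos (x := 1 + 1/a) (by positivity)
    rw [hL]; linarith
  have hLge : 1/(a+1) ≤ L := by
    have h := Real.log_le_sub_one_of_pos (x := (1 + 1/a)⁻¹) (by positivity)
    rw [Real.log_inv] at h
    have h2 : 1 - (1+1/a)⁻¹ ≤ L := by linarith
    have h3 : (1:ℝ)/(a+1) = 1 - (1+1/a)⁻¹ := by
      rw [inv_eq_one_div]; field_simp; ring
    linarith [h2, h3.le, h3.ge]
  have h1a : (1:ℝ) + 1/a = (a+1)/a := by field_simp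
  have hlogb : Real.log (a/(a+1)) = -L := by
    rw [hL, h1a, ← Real.log_inv]
    congr 1
    rw [inv_div]
  -- rewrite f as exp
  have hf : (1 - 1/(a+1)) ^ (6 * a * Real.log n)
      = Real.exp (-L * (6 * a * Real.log n)) := by
    rw [hb, Real.rpow_def_of_pos hbpos, hlogb]
  clear_value L a n
  obtain ⟨E, hE⟩ : ∃ E : ℝ, E = 6 * Real.log n * (1 - a * L) := ⟨_, rfl⟩
  have hEnn : 0 ≤ E := by
    have hal : a * L ≤ 1 := by
      calc a * L ≤ a * (1/a) := by nlinarith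
        _ = 1 := by field_simp
    have h1 : 0 ≤ 1 - a * L := by linarith
    rw [hE]; positivity
  have hEle : E ≤ 6 * Real.log n / a := by
    have h1 : a * (1/(a+1)) ≤ a * L := by nlinarith
    have h2 : 1 - a * L ≤ 1/(a+1) := by
      have : a * (1/(a+1)) = a/(a+1) := by ring
      have h3 : 1 - a/(a+1) = 1/(a+1) := by field_simp; ring
      nlinarith
    have h4 : (1:ℝ)/(a+1) ≤ 1/a := by
      apply div_le_div_of_nonneg_left (by norm_num) ha0 (by linarith)
    calc E ≤ 6 * Real.log n * (1/a) := by rw [hE]; nlinarith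
      _ = 6 * Real.log n / a := by ring
  have hloglt : Real.log n ≤ n - 1 := by
    have := Real.log_le_sub_one_of_pos hn0; linarith
  have hE1 : E ≤ 1 := by
    have h1 : 6 * Real.log n / a ≤ 1 := by
      rw [div_le_one ha0, ha]
      nlinarith [hloglt, hn2, mul_nonneg (sub_nonneg.mpr hn2) (sq_nonneg (n-1))]
    linarith
  have hexpE : Real.exp E ≤ 3 := by
    calc Real.exp E ≤ Real.exp 1 := Real.exp_le_exp.mpr hE1
      _ ≤ 3 := by linarith [Real.exp_one_lt_d9]
  have hexpE1 : Real.exp E - 1 ≤ E * Real.exp E := by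
    have h1 : -E + 1 ≤ Real.exp (-E) := Real.add_one_le_exp (-E)
    have h2 : Real.exp E * (-E + 1) ≤ 1 := by
      calc Real.exp E * (-E + 1) ≤ Real.exp E * Real.exp (-E) :=
            mul_le_mul_of_nonneg_left h1 (Real.exp_pos E).le
        _ = 1 := by rw [← Real.exp_add]; simp
    ring_nf at h2 ⊢; nlinarith [h2]
  have hexpEge : 1 ≤ Real.exp E := Real.one_le_exp hEnn
  -- n^(-6)
  have hpow6 : n ^ (-(6:ℝ)) = Real.exp (-(6 * Real.log n)) := by
    rw [Real.rpow_def_of_pos hn0]; ring_nf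
  have hsplit : -L * (6 * a * Real.log n) = E + -(6 * Real.log n) := by
    rw [hE]; ring
  have key : (1 - 1/(a+1)) ^ (6 * a * Real.log n) - n ^ (-(6:ℝ))
      = Real.exp (-(6 * Real.log n)) * (Real.exp E - 1) := by
    rw [hf, hpow6, hsplit, Real.exp_add]; ring
  have hexp6 : Real.exp (-(6 * Real.log n)) = (n ^ (6:ℕ))⁻¹ := by
    rw [Real.exp_neg]
    congr 1
    rw [show (6:ℝ) * Real.log n = ((6:ℕ):ℝ) * Real.log n by norm_num,
      ← Real.log_pow, Real.exp_log (by positivity)]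
  have hfinal : Real.exp (-(6 * Real.log n)) * (Real.exp E - 1)
      ≤ 18 * (Real.log n / n ^ (9:ℕ)) := by
    have h1 : Real.exp E - 1 ≤ 3 * E := by
      have h0 : E * Real.exp E ≤ E * 3 := mul_le_mul_of_nonneg_left hexpE hEnn
      linarith
    have h2 : Real.exp E - 1 ≤ 18 * Real.log n / a := by
      calc Real.exp E - 1 ≤ 3 * E := h1
        _ ≤ 3 * (6 * Real.log n / a) := by linarith
        _ = 18 * Real.log n / a := by ring
    have h3 : (n ^ (6:ℕ))⁻¹ * (18 * Real.log n / a) = 18 * (Real.log n / n ^ (9:ℕ)) := by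
      rw [ha]
      have : n ^ (9:ℕ) = n ^ (6:ℕ) * n ^ (3:ℕ) := by ring
      rw [this]
      field_simp
    calc Real.exp (-(6 * Real.log n)) * (Real.exp E - 1) -- dummy
        = (n ^ (6:ℕ))⁻¹ * (Real.exp E - 1) := by rw [hexp6]
      _ ≤ (n ^ (6:ℕ))⁻¹ * (18 * Real.log n / a) := by
          apply mul_le_mul_of_nonneg_left h2 (by positivity)
      _ = 18 * (Real.log n / n ^ (9:ℕ)) := h3
  have hnonneg : 0 ≤ Real.exp (-(6 * Real.log n)) * (Real.exp E - 1) := by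
    exact mul_nonneg (Real.exp_pos _).le (by linarith)
  rw [Real.norm_eq_abs, Real.norm_eq_abs]
  rw [key]
  rw [abs_of_nonneg hnonneg, abs_of_nonneg (by positivity)]
  exact hfinal
end

section
/- For every real ε with 0 < ε < 1/2 there exists a constant C > 0 such that for every positive integer N and every function α : ℕ → ℂ, one has Σ_{m=1}^{N} Σ_{n=1}^{N} |α_m| · |α_n| · Σ_{d | gcd(m,n)} (d²/(m·n))^{1/2−ε} ≤ C · N^{3ε} · Σ_{n=1}^{N} |α_n|². -/
/-!
Since `d² / (m n) = (d / m) (d / n)`, summing over `d` first turns the left side into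
`∑_d (∑_{d ∣ m} |α_m| (d / m)^(1/2 - ε))²`. Cauchy–Schwarz inside each square costs
`∑_{k ≤ N} k^(2ε - 1) ≪ N^(2ε)` (comparison with an integral), and leaves
`∑_m τ(m) |α_m|²`, which the divisor bound `τ(m) ≪ m^ε` controls by `N^ε ∑_m |α_m|²`.
-/

open Finset Real

theorem add_one_le_pow_of_two_le {x : ℝ} (hx : 2 ≤ x) (a : ℕ) : (a : ℝ) + 1 ≤ x ^ a := by
  have hbern := one_add_mul_le_pow (a := x - 1) (by linarith) a
  rw [add_sub_cancel] at hbern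
  nlinarith [(Nat.cast_nonneg a : (0 : ℝ) ≤ a)]

theorem add_one_le_mul_pow {x : ℝ} (hx : 1 < x) (a : ℕ) :
    (a : ℝ) + 1 ≤ (1 + 1 / (x - 1)) * x ^ a := by
  have hbern := one_add_mul_le_pow (a := x - 1) (by linarith) a
  rw [add_sub_cancel] at hbern
  have hx1 : 0 < x - 1 := sub_pos.2 hx
  calc (a : ℝ) + 1 ≤ (1 + 1 / (x - 1)) * (1 + a * (x - 1)) := by
        have : (1 + 1 / (x - 1)) * (1 + a * (x - 1)) = a + 1 + (a * (x - 1) + 1 / (x - 1)) := by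
          field_simp; ring
        rw [this]; linarith [show 0 ≤ a * (x - 1) + 1 / (x - 1) by positivity]
    _ ≤ _ := by gcongr

/-- Only primes `p < 2^(1/ε)` cost a constant factor: for larger `p` already
`a + 1 ≤ 2^a ≤ (p^a)^ε`. -/
theorem Nat.card_divisors_le_mul_rpow {ε : ℝ} (hε : 0 < ε) :
    ∃ C : ℝ, 0 < C ∧ ∀ n : ℕ, n ≠ 0 → (#n.divisors : ℝ) ≤ C * (n : ℝ) ^ ε := by
  have h2ε : 1 < (2 : ℝ) ^ ε := one_lt_rpow one_lt_two hε
  set K : ℝ := 1 + 1 / ((2 : ℝ) ^ ε - 1)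
  set B : ℕ := ⌈(2 : ℝ) ^ ε⁻¹⌉₊
  have hK : 1 ≤ K := le_add_of_nonneg_right (by simp only [one_div, inv_nonneg]; linarith)
  have hprime : ∀ p a : ℕ, 2 ≤ p →
      (a : ℝ) + 1 ≤ (if p ≤ B then K else 1) * ((p : ℝ) ^ a) ^ ε := by
    intro p a hp
    have hp' : (2 : ℝ) ≤ p := by exact_mod_cast hp
    rw [← rpow_natCast_mul (by positivity), mul_comm (a : ℝ), rpow_mul_natCast (by positivity)]
    split_ifs with hpB
    · calc (a : ℝ) + 1 ≤ K * ((2 : ℝ) ^ ε) ^ a := add_one_le_mul_pow h2ε a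
        _ ≤ K * ((p : ℝ) ^ ε) ^ a := by gcongr
    · rw [one_mul]
      refine add_one_le_pow_of_two_le ?_ a
      rw [← rpow_inv_le_iff_of_pos zero_le_two (by positivity) hε]
      exact (Nat.le_ceil _).trans (by exact_mod_cast (not_le.1 hpB).le)
  refine ⟨K ^ B, by positivity, fun n hn => ?_⟩
  calc (#n.divisors : ℝ) = ∏ p ∈ n.primeFactors, ((n.factorization p : ℝ) + 1) := by
        rw [Nat.card_divisors hn]; push_cast; rfl
    _ ≤ ∏ p ∈ n.primeFactors, ((if p ≤ B then K else 1) * ((p : ℝ) ^ n.factorization p) ^ ε) :=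
        prod_le_prod (fun _ _ => by positivity) fun p hp =>
          hprime p _ (Nat.prime_of_mem_primeFactors hp).two_le
    _ = (∏ p ∈ n.primeFactors, if p ≤ B then K else 1) * (n : ℝ) ^ ε := by
        rw [prod_mul_distrib, finsetProd_rpow _ _ fun _ _ => by positivity]
        congr
        exact_mod_cast (Nat.prod_primeFactors_pow_factorization hn).symm
    _ ≤ K ^ B * (n : ℝ) ^ ε := by
        gcongr
        rw [prod_ite, prod_const_one, mul_one, prod_const]
        refine pow_le_pow_right₀ hK ((card_le_card fun p hp => ?_).trans (Nat.card_Icc 1 B).le)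
        simp only [mem_filter, Nat.mem_primeFactors] at hp
        exact mem_Icc.2 ⟨hp.1.1.one_lt.le, hp.2⟩

theorem sum_Icc_rpow_sub_one_le {s : ℝ} (hs : 0 < s) (hs1 : s ≤ 1) (N : ℕ) :
    ∑ k ∈ Icc 1 N, (k : ℝ) ^ (s - 1) ≤ (1 + 1 / s) * (N : ℝ) ^ s := by
  rcases N with _ | M
  · simp [zero_rpow hs.ne']
  have hanti : AntitoneOn (fun x : ℝ => x ^ (s - 1)) (Set.Icc 1 (1 + M)) :=
    fun x hx y _ hxy => rpow_le_rpow_of_nonpos (by linarith [hx.1]) hxy (by linarith)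
  have hint : ∑ i ∈ range M, ((1 : ℝ) + ↑(i + 1)) ^ (s - 1) ≤
      (((M + 1 : ℕ) : ℝ) ^ s - 1) / s := by
    convert hanti.sum_le_integral using 1
    rw [integral_rpow (by left; linarith)]
    push_cast
    rw [one_rpow, sub_add_cancel, add_comm (M : ℝ)]
  have h1 : 1 ≤ ((M + 1 : ℕ) : ℝ) ^ s := one_le_rpow (by simp) hs.le
  calc ∑ k ∈ Icc 1 (M + 1), (k : ℝ) ^ (s - 1)
      = 1 + ∑ i ∈ range M, ((1 : ℝ) + ↑(i + 1)) ^ (s - 1) := by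
        rw [← Ico_add_one_right_eq_Icc, sum_Ico_eq_sum_range, Nat.add_sub_cancel, sum_range_succ']
        simp [add_comm]
    _ ≤ 1 + (((M + 1 : ℕ) : ℝ) ^ s - 1) / s := by gcongr
    _ ≤ (1 + 1 / s) * ((M + 1 : ℕ) : ℝ) ^ s := by
        rw [add_mul, one_mul, one_div_mul_eq_div]
        gcongr; linarith

theorem filter_dvd_Icc_eq_divisors {N m : ℕ} (hm : m ∈ Icc 1 N) :
    {d ∈ Icc 1 N | d ∣ m} = m.divisors := by
  obtain ⟨hm1, hmN⟩ := mem_Icc.1 hm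
  ext d
  simp only [mem_filter, mem_Icc, Nat.mem_divisors]
  constructor
  · rintro ⟨-, hd⟩
    exact ⟨hd, by omega⟩
  · rintro ⟨hd, -⟩
    exact ⟨⟨Nat.pos_of_dvd_of_pos hd hm1, (Nat.le_of_dvd hm1 hd).trans hmN⟩, hd⟩

theorem divisors_gcd_eq_filter {N m : ℕ} (hm : m ∈ Icc 1 N) (n : ℕ) :
    (m.gcd n).divisors = {d ∈ Icc 1 N | d ∣ m ∧ d ∣ n} := by
  have hm0 : m ≠ 0 := by have := (mem_Icc.1 hm).1; omega
  ext d
  rw [← filter_filter, filter_dvd_Icc_eq_divisors hm]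
  simp [Nat.dvd_gcd_iff, hm0]

theorem sum_sum_sum_divisors_gcd_eq_sum_sq {R : Type*} [CommSemiring R] (N : ℕ)
    (g : ℕ → ℕ → R) :
    ∑ m ∈ Icc 1 N, ∑ n ∈ Icc 1 N, ∑ d ∈ (m.gcd n).divisors, g d m * g d n =
      ∑ d ∈ Icc 1 N, (∑ m ∈ Icc 1 N with d ∣ m, g d m) ^ 2 := by
  calc _ = ∑ m ∈ Icc 1 N, ∑ n ∈ Icc 1 N, ∑ d ∈ Icc 1 N,
        if d ∣ m ∧ d ∣ n then g d m * g d n else 0 :=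
        sum_congr rfl fun m hm => sum_congr rfl fun n _ => by
          rw [divisors_gcd_eq_filter hm, sum_filter]
    _ = ∑ d ∈ Icc 1 N, ∑ m ∈ Icc 1 N, ∑ n ∈ Icc 1 N,
        if d ∣ m ∧ d ∣ n then g d m * g d n else 0 :=
        (sum_congr rfl fun _ _ => sum_comm).trans sum_comm
    _ = _ := sum_congr rfl fun d _ => by
        rw [sq, sum_filter, sum_mul_sum]
        refine sum_congr rfl fun m _ => sum_congr rfl fun n _ => ?_
        by_cases hm : d ∣ m <;> by_cases hn : d ∣ n <;> simp [hm, hn]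

theorem sum_sum_filter_dvd_eq_sum_card_divisors_mul {R : Type*} [CommSemiring R] (N : ℕ)
    (f : ℕ → R) :
    ∑ d ∈ Icc 1 N, ∑ m ∈ Icc 1 N with d ∣ m, f m = ∑ m ∈ Icc 1 N, #m.divisors * f m := by
  simp_rw [sum_filter]
  rw [sum_comm]
  refine sum_congr rfl fun m hm => ?_
  rw [← sum_filter, filter_dvd_Icc_eq_divisors hm, sum_const, nsmul_eq_mul]

theorem sum_filter_dvd_div_rpow_le {s : ℝ} (hs : 0 < s) (hs1 : s ≤ 1) (N d : ℕ) :
    ∑ m ∈ Icc 1 N with d ∣ m, ((d : ℝ) / m) ^ (1 - s) ≤ (1 + 1 / s) * (N : ℝ) ^ s := by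
  set S := {m ∈ Icc 1 N | d ∣ m}
  have hterm : ∀ m ∈ S, ((d : ℝ) / m) ^ (1 - s) = ((m / d : ℕ) : ℝ) ^ (s - 1) := by
    intro m hm
    obtain ⟨hm, k, rfl⟩ := mem_filter.1 hm
    have hd : d ≠ 0 := by rintro rfl; simp at hm
    rw [Nat.mul_div_cancel_left k (Nat.pos_of_ne_zero hd), Nat.cast_mul,
      div_mul_cancel_left₀ (by exact_mod_cast hd), inv_rpow (by positivity),
      ← rpow_neg (by positivity), neg_sub]
  have hinj : Set.InjOn (· / d) S := fun x hx y hy hxy =>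
    (Nat.div_left_inj (mem_filter.1 hx).2 (mem_filter.1 hy).2).1 hxy
  have himage : S.image (· / d) ⊆ Icc 1 N := by
    intro k hk
    obtain ⟨m, hm, rfl⟩ := mem_image.1 hk
    obtain ⟨hm, hdm⟩ := mem_filter.1 hm
    obtain ⟨hm1, hmN⟩ := mem_Icc.1 hm
    exact mem_Icc.2 ⟨Nat.div_pos (Nat.le_of_dvd hm1 hdm) (Nat.pos_of_dvd_of_pos hdm hm1),
      (Nat.div_le_self m d).trans hmN⟩
  calc _ = ∑ k ∈ S.image (· / d), (k : ℝ) ^ (s - 1) := by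
        rw [sum_image hinj]; exact sum_congr rfl hterm
    _ ≤ ∑ k ∈ Icc 1 N, (k : ℝ) ^ (s - 1) :=
        sum_le_sum_of_subset_of_nonneg himage fun _ _ _ => by positivity
    _ ≤ _ := sum_Icc_rpow_sub_one_le hs hs1 N

theorem sum_sq_sum_filter_dvd_le {ε : ℝ} (hε : 0 < ε) (hε2 : ε ≤ 1 / 2) (N : ℕ) (a : ℕ → ℝ) :
    ∑ d ∈ Icc 1 N, (∑ m ∈ Icc 1 N with d ∣ m, a m * ((d : ℝ) / m) ^ (1 / 2 - ε)) ^ 2 ≤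
      (1 + 1 / (2 * ε)) * (N : ℝ) ^ (2 * ε) *
        ∑ d ∈ Icc 1 N, ∑ m ∈ Icc 1 N with d ∣ m, a m ^ 2 := by
  rw [mul_sum]
  refine sum_le_sum fun d _ => ?_
  have hweights : ∑ m ∈ Icc 1 N with d ∣ m, (((d : ℝ) / m) ^ (1 / 2 - ε)) ^ 2 ≤
      (1 + 1 / (2 * ε)) * (N : ℝ) ^ (2 * ε) := by
    simp_rw [← rpow_mul_natCast (div_nonneg (Nat.cast_nonneg _) (Nat.cast_nonneg _))]
    convert sum_filter_dvd_div_rpow_le (s := 2 * ε) (by positivity) (by linarith) N d using 3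
    push_cast; ring
  calc _ ≤ (∑ m ∈ Icc 1 N with d ∣ m, (((d : ℝ) / m) ^ (1 / 2 - ε)) ^ 2) *
        ∑ m ∈ Icc 1 N with d ∣ m, a m ^ 2 := by
        simp_rw [mul_comm (a _)]
        exact sum_mul_sq_le_sq_mul_sq _ _ _
    _ ≤ _ := mul_le_mul_of_nonneg_right hweights (sum_nonneg fun _ _ => sq_nonneg _)

theorem sum_sum_mul_sum_divisors_gcd_rpow_le {ε C : ℝ} (hε : 0 < ε) (hε2 : ε ≤ 1 / 2)
    (hτ : ∀ n : ℕ, n ≠ 0 → (#n.divisors : ℝ) ≤ C * (n : ℝ) ^ ε) (N : ℕ) (a : ℕ → ℝ) :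
    ∑ m ∈ Icc 1 N, ∑ n ∈ Icc 1 N, a m * a n *
        ∑ d ∈ (m.gcd n).divisors, ((d : ℝ) ^ 2 / (m * n)) ^ (1 / 2 - ε) ≤
      (1 + 1 / (2 * ε)) * C * (N : ℝ) ^ (3 * ε) * ∑ n ∈ Icc 1 N, a n ^ 2 := by
  have hC : 0 ≤ C := zero_le_one.trans (by simpa using hτ 1 one_ne_zero)
  have hsplit : ∀ m n d : ℕ, a m * a n * ((d : ℝ) ^ 2 / (m * n)) ^ (1 / 2 - ε) =
      a m * ((d : ℝ) / m) ^ (1 / 2 - ε) * (a n * ((d : ℝ) / n) ^ (1 / 2 - ε)) := by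
    intro m n d
    rw [show (d : ℝ) ^ 2 / (m * n) = d / m * (d / n) by ring,
      mul_rpow (by positivity) (by positivity)]
    ring
  have hτN : ∀ m ∈ Icc 1 N, (#m.divisors : ℝ) ≤ C * (N : ℝ) ^ ε := fun m hm =>
    (hτ m (by have := (mem_Icc.1 hm).1; omega)).trans <| by
      gcongr; exact_mod_cast (mem_Icc.1 hm).2
  calc _ = ∑ d ∈ Icc 1 N,
        (∑ m ∈ Icc 1 N with d ∣ m, a m * ((d : ℝ) / m) ^ (1 / 2 - ε)) ^ 2 := by
        simp_rw [mul_sum, hsplit]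
        exact sum_sum_sum_divisors_gcd_eq_sum_sq N _
    _ ≤ (1 + 1 / (2 * ε)) * (N : ℝ) ^ (2 * ε) * ∑ m ∈ Icc 1 N, #m.divisors * a m ^ 2 := by
        rw [← sum_sum_filter_dvd_eq_sum_card_divisors_mul]
        exact sum_sq_sum_filter_dvd_le hε hε2 N a
    _ ≤ (1 + 1 / (2 * ε)) * (N : ℝ) ^ (2 * ε) * (C * (N : ℝ) ^ ε * ∑ m ∈ Icc 1 N, a m ^ 2) := by
        refine mul_le_mul_of_nonneg_left ?_ (by positivity)
        rw [mul_sum]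
        exact sum_le_sum fun m hm => mul_le_mul_of_nonneg_right (hτN m hm) (sq_nonneg _)
    _ = _ := by
        rw [show 3 * ε = 2 * ε + ε by ring, rpow_add' (Nat.cast_nonneg _) (by positivity)]
        ring

/-- Diagonal-term estimate in the amplification method: for every 0 < ε < 1/2 there is a
constant C > 0 such that for every positive integer N and every α : ℕ → ℂ,
Σ_{m=1}^{N} Σ_{n=1}^{N} |α_m||α_n| Σ_{d | gcd(m,n)} (d²/(mn))^{1/2−ε}
  ≤ C · N^{3ε} · Σ_{n=1}^{N} |α_n|². -/
theorem diagonal_amplifier_bound :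
    ∀ ε : ℝ, 0 < ε → ε < 1 / 2 → ∃ C : ℝ, 0 < C ∧
      ∀ N : ℕ, 0 < N → ∀ α : ℕ → ℂ,
        (∑ m ∈ Finset.Icc 1 N, ∑ n ∈ Finset.Icc 1 N,
            ‖α m‖ * ‖α n‖ *
              ∑ d ∈ (Nat.gcd m n).divisors,
                (((d : ℝ) ^ (2 : ℕ)) / ((m : ℝ) * (n : ℝ))) ^ ((1 : ℝ) / 2 - ε)) ≤
          C * (N : ℝ) ^ (3 * ε) * ∑ n ∈ Finset.Icc 1 N, ‖α n‖ ^ (2 : ℕ) := by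
  intro ε hε hε2
  obtain ⟨C, hC, hτ⟩ := Nat.card_divisors_le_mul_rpow hε
  exact ⟨(1 + 1 / (2 * ε)) * C, by positivity, fun N _ α =>
    sum_sum_mul_sum_divisors_gcd_rpow_le hε hε2.le hτ N fun m => ‖α m‖⟩
end
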